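/- Let 𝒜 ⊆ E^∞, x⃗ a finite block sequence, and X, Y block subspaces with Y ⊆* X. If I has a strategy in the relational game B_X(x⃗) to play in 𝒜, then I has a strategy in B_Y(x⃗) to play in 𝒜. -/

import Mathlib

section Defs

variable {𝔽 : Type} [Field 𝔽] {E : Type} [AddCommGroup E] [Module 𝔽 E]

/-- The support of a vector with respect to the basis `b`. -/
noncomputable def supp (b : Module.Basis ℕ 𝔽 E) (x : E) : Finset ℕ :=
  (b.repr x).support

/-- `VecLt b x y` means `x < y`: every element of the support of `x` is smaller than
every element of the support of `y`. -/
def VecLt (b : Module.Basis ℕ 𝔽 E) (x y : E) : Prop :=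
  ∀ m ∈ supp b x, ∀ n ∈ supp b y, m < n

/-- `NatLt b k x` means `k < x`: `k` is smaller than every element of the support of `x`. -/
def NatLt (b : Module.Basis ℕ 𝔽 E) (k : ℕ) (x : E) : Prop :=
  ∀ n ∈ supp b x, k < n

/-- An infinite block sequence: a sequence of nonzero vectors with `x n < x (n + 1)`. -/
def IsBlockSeq (b : Module.Basis ℕ 𝔽 E) (x : ℕ → E) : Prop :=
  (∀ n, x n ≠ 0) ∧ ∀ n, VecLt b (x n) (x (n + 1))

/-- A finite block sequence: a list of nonzero vectors, consecutively increasing in the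
block ordering. -/
def IsFinBlockSeq (b : Module.Basis ℕ 𝔽 E) (l : List E) : Prop :=
  (∀ x ∈ l, x ≠ 0) ∧ l.Chain' (VecLt b)

/-- A block subspace: a subspace spanned by an infinite block sequence. -/
def IsBlockSubspace (b : Module.Basis ℕ 𝔽 E) (X : Submodule 𝔽 E) : Prop :=
  ∃ y : ℕ → E, IsBlockSeq b y ∧ X = Submodule.span 𝔽 (Set.range y)

/-- The list of the first `n` values of a sequence. -/
def hist {α : Type _} (x : ℕ → α) (n : ℕ) : List α :=
  List.ofFn (fun j : Fin n => x j)

/-- The concatenation of a finite prefix with an infinite sequence. -/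
def prefCat {α : Type _} (l : List α) (x : ℕ → α) : ℕ → α := fun n =>
  if h : n < l.length then l.get ⟨n, h⟩ else x (n - l.length)

/-- `Y ⊆* X`: `Y` is spanned by an infinite block sequence all but finitely many of
whose terms belong to `X`. -/
def SubsetStar (b : Module.Basis ℕ 𝔽 E) (Y X : Submodule 𝔽 E) : Prop :=
  ∃ y : ℕ → E, IsBlockSeq b y ∧ Y = Submodule.span 𝔽 (Set.range y) ∧
    ∃ N : ℕ, ∀ m, N ≤ m → y m ∈ X

/-- The interleaving `x 0, y 0, x 1, y 1, …` of two sequences. -/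
def interleave {α : Type _} (x y : ℕ → α) : ℕ → α := fun k =>
  if k % 2 = 0 then x (k / 2) else y (k / 2)

/-- Helper: the sequence of integers produced by a strategy answering plays
`p i : E × Submodule 𝔽 E` with a vector and an integer, starting with `n0`. -/
def natsA (n0 : ℕ) (σ : List (E × Submodule 𝔽 E) → E × ℕ)
    (p : ℕ → E × Submodule 𝔽 E) : ℕ → ℕ
  | 0 => n0
  | k + 1 => (σ (hist p (k + 1))).2

/-- Player I has a strategy in the relational game `B_X(pre)` to play in `A`
(case of an even-length prefix): II plays block subspaces `Z i ≤ X` and nonzero vectors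
`y i ∈ X` with `n i < y i`, II's vectors forming a block sequence; I answers `Z i` with
a nonzero vector `x i ∈ Z i` (I's vectors forming a block sequence) and a strictly
increasing integer `n i`.  The outcome is `pre` followed by `x 0, y 0, x 1, y 1, …`. -/
def IWinsBEven (b : Module.Basis ℕ 𝔽 E) (X : Submodule 𝔽 E) (pre : List E)
    (A : Set (ℕ → E)) : Prop :=
  ∃ τ : List (Submodule 𝔽 E × E) → Submodule 𝔽 E → E × ℕ,
    ∀ (Z : ℕ → Submodule 𝔽 E) (y : ℕ → E),
      (∀ i, IsBlockSubspace b (Z i) ∧ Z i ≤ X ∧ y i ∈ X ∧ y i ≠ 0 ∧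
          NatLt b (τ (hist (fun j => (Z j, y j)) i) (Z i)).2 (y i) ∧
          VecLt b (y i) (y (i + 1))) →
      (∀ i, (τ (hist (fun j => (Z j, y j)) i) (Z i)).1 ∈ Z i ∧
          (τ (hist (fun j => (Z j, y j)) i) (Z i)).1 ≠ 0 ∧
          VecLt b (τ (hist (fun j => (Z j, y j)) i) (Z i)).1
            (τ (hist (fun j => (Z j, y j)) (i + 1)) (Z (i + 1))).1 ∧
          (τ (hist (fun j => (Z j, y j)) i) (Z i)).2 <
            (τ (hist (fun j => (Z j, y j)) (i + 1)) (Z (i + 1))).2) ∧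
        prefCat pre
          (interleave (fun i => (τ (hist (fun j => (Z j, y j)) i) (Z i)).1) y) ∈ A

/-- Player I has a strategy in the relational game `B_X(pre)` to play in `A`
(case of an odd-length prefix): I opens with an integer `t0`; II plays nonzero vectors
`y i ∈ X` with `n i < y i`, forming a block sequence, together with block subspaces
`Z i ≤ X`; I answers with a nonzero vector `x i ∈ Z i` (I's vectors forming a block
sequence) and the next integer `n (i+1)`, the integers being strictly increasing.  The
outcome is `pre` followed by `y 0, x 0, y 1, x 1, …`. -/
def IWinsBOdd (b : Module.Basis ℕ 𝔽 E) (X : Submodule 𝔽 E) (pre : List E)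
    (A : Set (ℕ → E)) : Prop :=
  ∃ (t0 : ℕ) (τ : List (E × Submodule 𝔽 E) → E × ℕ),
    ∀ q : ℕ → E × Submodule 𝔽 E,
      (∀ i, (q i).1 ∈ X ∧ (q i).1 ≠ 0 ∧ NatLt b (natsA t0 τ q i) (q i).1 ∧
          VecLt b (q i).1 (q (i + 1)).1 ∧ IsBlockSubspace b (q i).2 ∧ (q i).2 ≤ X) →
      (∀ i, (τ (hist q (i + 1))).1 ∈ (q i).2 ∧ (τ (hist q (i + 1))).1 ≠ 0 ∧
          VecLt b (τ (hist q (i + 1))).1 (τ (hist q (i + 2))).1 ∧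
          natsA t0 τ q i < natsA t0 τ q (i + 1)) ∧
        prefCat pre
          (interleave (fun i => (q i).1) (fun i => (τ (hist q (i + 1))).1)) ∈ A

/-- Player I has a strategy in the relational game `B_X(pre)` to play in `A`. -/
def IWinsB (b : Module.Basis ℕ 𝔽 E) (X : Submodule 𝔽 E) (pre : List E)
    (A : Set (ℕ → E)) : Prop :=
  if pre.length % 2 = 0 then IWinsBEven b X pre A else IWinsBOdd b X pre A

end Defs
section Aux
variable {𝔽 : Type} [Field 𝔽] {E : Type} [AddCommGroup E] [Module 𝔽 E]

lemma supp_nonempty (b : Module.Basis ℕ 𝔽 E) {x : E} (hx : x ≠ 0) : (supp b x).Nonempty := by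
  rw [supp, Finsupp.support_nonempty_iff]
  simpa using hx

lemma vecLt_trans (b : Module.Basis ℕ 𝔽 E) {x y z : E} (hy : y ≠ 0)
    (h1 : VecLt b x y) (h2 : VecLt b y z) : VecLt b x z := by
  intro m hm n hn
  obtain ⟨k, hk⟩ := supp_nonempty b hy
  exact (h1 m hm k hk).trans (h2 k hk n hn)

lemma blockSeq_vecLt (b : Module.Basis ℕ 𝔽 E) {y : ℕ → E} (h : IsBlockSeq b y)
    {m m' : ℕ} (hmm : m < m') : VecLt b (y m) (y m') := by
  induction m' with
  | zero => omega
  | succ k ih =>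
    rcases Nat.lt_succ_iff_lt_or_eq.mp hmm with h' | rfl
    · exact vecLt_trans b (h.1 k) (ih h') (h.2 k)
    · exact h.2 m

lemma blockSeq_le_supp (b : Module.Basis ℕ 𝔽 E) {z : ℕ → E} (h : IsBlockSeq b z)
    (m : ℕ) : ∀ n ∈ supp b (z m), m ≤ n := by
  induction m with
  | zero => intro n _; omega
  | succ k ih =>
    intro n hn
    obtain ⟨p, hp⟩ := supp_nonempty b (h.1 k)
    exact (ih p hp).trans_lt (h.2 k p hp n hn)

lemma exists_bound {X Y : Submodule 𝔽 E} (b : Module.Basis ℕ 𝔽 E) (hYX : SubsetStar b Y X) :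
    ∃ M : ℕ, ∀ v ∈ Y, NatLt b M v → v ∈ X := by
  obtain ⟨y, hy, hYeq, N, hN⟩ := hYX
  rcases N with _ | k
  · refine ⟨0, fun v hv _ => ?_⟩
    rw [hYeq] at hv
    refine Submodule.span_le.mpr ?_ hv
    rintro _ ⟨m, rfl⟩
    exact hN m (Nat.zero_le m)
  · set M := (supp b (y k)).max' (supp_nonempty b (hy.1 k)) with hM
    have hMmem : M ∈ supp b (y k) := Finset.max'_mem _ _
    refine ⟨M, fun v hv hlt => ?_⟩
    rw [hYeq, Finsupp.mem_span_range_iff_exists_finsupp] at hv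
    obtain ⟨c, hc⟩ := hv
    rw [Finsupp.sum] at hc
    rw [← Finset.sum_filter_add_sum_filter_not c.support (· ≤ k) (fun m => c m • y m)] at hc
    set v1 := ∑ m ∈ c.support.filter (· ≤ k), c m • y m with hv1
    set v2 := ∑ m ∈ c.support.filter (fun m => ¬ m ≤ k), c m • y m with hv2
    have hv2X : v2 ∈ X := by
      refine Submodule.sum_mem _ fun m hm => Submodule.smul_mem _ _ ?_
      have : ¬ m ≤ k := (Finset.mem_filter.mp hm).2
      exact hN m (by omega)
    -- supports
    have hlow : ∀ m ≤ k, ∀ n ∈ supp b (y m), n ≤ M := by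
      intro m hm n hn
      rcases eq_or_lt_of_le hm with rfl | hmk
      · exact Finset.le_max' _ _ hn
      · exact le_of_lt (blockSeq_vecLt b hy hmk n hn M hMmem)
    have hhigh : ∀ m, k < m → ∀ n ∈ supp b (y m), M < n := by
      intro m hm n hn
      exact blockSeq_vecLt b hy hm M hMmem n hn
    have hrepr1 : ∀ n, b.repr v1 n = b.repr v n - b.repr v2 n := by
      intro n
      have : v1 = v - v2 := by rw [← hc]; abel
      rw [this, map_sub, Finsupp.sub_apply]
    have hv1z : v1 = 0 := by
      have : b.repr v1 = 0 := by
        ext n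
        rcases le_or_gt n M with hn | hn
        · rw [hrepr1 n]
          have h1 : b.repr v n = 0 := by
            by_contra hne
            exact absurd (hlt n (Finsupp.mem_support_iff.mpr hne)) (by omega)
          have h2 : b.repr v2 n = 0 := by
            rw [hv2, map_sum, Finset.sum_apply']
            refine Finset.sum_eq_zero fun m hm => ?_
            have hmk : ¬ m ≤ k := (Finset.mem_filter.mp hm).2
            rw [map_smul, Finsupp.smul_apply]
            have : b.repr (y m) n = 0 := by
              by_contra hne
              exact absurd (hhigh m (by omega) n (Finsupp.mem_support_iff.mpr hne)) (by omega)
            rw [this, smul_zero]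
          simp [h1, h2]
        · rw [hv1, map_sum, Finset.sum_apply']
          refine Finset.sum_eq_zero fun m hm => ?_
          have hmk : m ≤ k := (Finset.mem_filter.mp hm).2
          rw [map_smul, Finsupp.smul_apply]
          have : b.repr (y m) n = 0 := by
            by_contra hne
            exact absurd (hlow m hmk n (Finsupp.mem_support_iff.mpr hne)) (by omega)
          rw [this, smul_zero]
      have := congrArg b.repr.symm this
      simpa using this
    rw [← hc, hv1z, zero_add]
    exact hv2X

end Aux
section Aux2
variable {𝔽 : Type} [Field 𝔽] {E : Type} [AddCommGroup E] [Module 𝔽 E]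

lemma exists_shrink {X Y : Submodule 𝔽 E} (b : Module.Basis ℕ 𝔽 E) (M : ℕ)
    (hM : ∀ v ∈ Y, NatLt b M v → v ∈ X) (Z : Submodule 𝔽 E)
    (hZ : IsBlockSubspace b Z) (hZY : Z ≤ Y) :
    ∃ W, IsBlockSubspace b W ∧ W ≤ Z ∧ W ≤ X := by
  obtain ⟨z, hz, hZeq⟩ := hZ
  refine ⟨Submodule.span 𝔽 (Set.range fun m => z (m + (M + 1))), ?_, ?_, ?_⟩
  · exact ⟨fun m => z (m + (M + 1)), ⟨fun m => hz.1 _, fun m => by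
      have := hz.2 (m + (M + 1)); simpa [Nat.add_right_comm] using this⟩, rfl⟩
  · rw [hZeq]
    exact Submodule.span_le.mpr (by rintro _ ⟨m, rfl⟩; exact Submodule.subset_span ⟨m + (M + 1), rfl⟩)
  · refine Submodule.span_le.mpr ?_
    rintro _ ⟨m, rfl⟩
    have hmem : z (m + (M + 1)) ∈ Z := by
      rw [hZeq]; exact Submodule.subset_span ⟨m + (M + 1), rfl⟩
    refine hM _ (hZY hmem) fun n hn => ?_
    have := blockSeq_le_supp b hz (m + (M + 1)) n hn
    omega

open Classical in
/-- A choice of block subspace of `Z` contained in `X`, when one exists. -/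
noncomputable def shrinkSub (b : Module.Basis ℕ 𝔽 E) (X Z : Submodule 𝔽 E) : Submodule 𝔽 E :=
  if h : ∃ W, IsBlockSubspace b W ∧ W ≤ Z ∧ W ≤ X then h.choose else ⊥

lemma shrinkSub_spec {X Y : Submodule 𝔽 E} (b : Module.Basis ℕ 𝔽 E) (M : ℕ)
    (hM : ∀ v ∈ Y, NatLt b M v → v ∈ X) (Z : Submodule 𝔽 E)
    (hZ : IsBlockSubspace b Z) (hZY : Z ≤ Y) :
    IsBlockSubspace b (shrinkSub b X Z) ∧ shrinkSub b X Z ≤ Z ∧ shrinkSub b X Z ≤ X := by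
  have h := exists_shrink b M hM Z hZ hZY
  rw [shrinkSub]; rw [dif_pos h]
  exact h.choose_spec

lemma hist_map {α β : Type _} (f : α → β) (q : ℕ → α) (n : ℕ) :
    hist (fun j => f (q j)) n = (hist q n).map f := by
  simp [hist, List.map_ofFn]; rfl

end Aux2
theorem IWinsB_subsetStar
    {𝔽 : Type} [Field 𝔽] [Countable 𝔽]
    {E : Type} [AddCommGroup E] [Module 𝔽 E]
    (b : Module.Basis ℕ 𝔽 E) (A : Set (ℕ → E))
    (pre : List E) (hpre : IsFinBlockSeq b pre)
    (X Y : Submodule 𝔽 E) (hX : IsBlockSubspace b X) (hY : IsBlockSubspace b Y)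
    (hYX : SubsetStar b Y X) (h : IWinsB b X pre A) :
    IWinsB b Y pre A := by
  obtain ⟨M, hM⟩ := exists_bound b hYX
  rw [IWinsB] at h ⊢
  split_ifs at h ⊢ with hp
  · -- even case
    obtain ⟨τ, hτ⟩ := h
    set f : Submodule 𝔽 E × E → Submodule 𝔽 E × E :=
      fun p => (shrinkSub b X p.1, p.2) with hf
    set τ' : List (Submodule 𝔽 E × E) → Submodule 𝔽 E → E × ℕ :=
      fun l Z => ((τ (l.map f) (shrinkSub b X Z)).1,
        (τ (l.map f) (shrinkSub b X Z)).2 + M) with hτ'def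
    refine ⟨τ', ?_⟩
    intro Z y hplay
    set Z' : ℕ → Submodule 𝔽 E := fun i => shrinkSub b X (Z i) with hZ'
    have key : ∀ i, τ' (hist (fun j => (Z j, y j)) i) (Z i) =
        ((τ (hist (fun j => (Z' j, y j)) i) (Z' i)).1,
         (τ (hist (fun j => (Z' j, y j)) i) (Z' i)).2 + M) := by
      intro i
      have : hist (fun j => (Z' j, y j)) i =
          (hist (fun j => (Z j, y j)) i).map f := hist_map f (fun j => (Z j, y j)) i
      rw [hτ'def]
      simp only [this]
      rfl
    have hspec : ∀ i, IsBlockSubspace b (Z' i) ∧ Z' i ≤ Z i ∧ Z' i ≤ X :=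
      fun i => shrinkSub_spec b M hM (Z i) (hplay i).1 (hplay i).2.1
    have hplay' : ∀ i, IsBlockSubspace b (Z' i) ∧ Z' i ≤ X ∧ y i ∈ X ∧ y i ≠ 0 ∧
        NatLt b (τ (hist (fun j => (Z' j, y j)) i) (Z' i)).2 (y i) ∧
        VecLt b (y i) (y (i + 1)) := by
      intro i
      obtain ⟨h1, h2, h3, h4, h5, h6⟩ := hplay i
      rw [key i] at h5
      refine ⟨(hspec i).1, (hspec i).2.2, ?_, h4, ?_, h6⟩
      · exact hM _ h3 (fun n hn => by have := h5 n hn; omega)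
      · exact fun n hn => by have := h5 n hn; omega
    obtain ⟨hconds, hA⟩ := hτ Z' y hplay'
    constructor
    · intro i
      obtain ⟨c1, c2, c3, c4⟩ := hconds i
      rw [key i, key (i + 1)]
      exact ⟨(hspec i).2.1 c1, c2, c3, by omega⟩
    · have : (fun i => (τ' (hist (fun j => (Z j, y j)) i) (Z i)).1) =
          (fun i => (τ (hist (fun j => (Z' j, y j)) i) (Z' i)).1) :=
        funext fun i => by rw [key i]
      rw [this]
      exact hA
  · -- odd case
    obtain ⟨t0, τ, hτ⟩ := h
    set g : E × Submodule 𝔽 E → E × Submodule 𝔽 E :=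
      fun p => (p.1, shrinkSub b X p.2) with hg
    set τ' : List (E × Submodule 𝔽 E) → E × ℕ :=
      fun l => ((τ (l.map g)).1, (τ (l.map g)).2 + M) with hτ'def
    refine ⟨t0 + M, τ', ?_⟩
    intro q hplay
    set q' : ℕ → E × Submodule 𝔽 E := fun i => ((q i).1, shrinkSub b X (q i).2) with hq'
    have hhist : ∀ i, hist q' i = (hist q i).map g := fun i => hist_map g q i
    have keyτ : ∀ i, τ' (hist q i) = ((τ (hist q' i)).1, (τ (hist q' i)).2 + M) := by
      intro i; rw [hτ'def]; simp only [hhist i]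
    have keyn : ∀ i, natsA (t0 + M) τ' q i = natsA t0 τ q' i + M := by
      intro i
      cases i with
      | zero => rfl
      | succ k => show (τ' (hist q (k + 1))).2 = (τ (hist q' (k + 1))).2 + M
                  rw [keyτ (k + 1)]
    have hspec : ∀ i, IsBlockSubspace b (shrinkSub b X (q i).2) ∧
        shrinkSub b X (q i).2 ≤ (q i).2 ∧ shrinkSub b X (q i).2 ≤ X :=
      fun i => shrinkSub_spec b M hM ((q i).2) (hplay i).2.2.2.2.1 (hplay i).2.2.2.2.2
    have hplay' : ∀ i, (q' i).1 ∈ X ∧ (q' i).1 ≠ 0 ∧ NatLt b (natsA t0 τ q' i) (q' i).1 ∧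
        VecLt b (q' i).1 (q' (i + 1)).1 ∧ IsBlockSubspace b (q' i).2 ∧ (q' i).2 ≤ X := by
      intro i
      obtain ⟨h1, h2, h3, h4, h5, h6⟩ := hplay i
      rw [keyn i] at h3
      refine ⟨?_, h2, ?_, h4, (hspec i).1, (hspec i).2.2⟩
      · exact hM _ h1 (fun n hn => by have := h3 n hn; omega)
      · exact fun n hn => by have := h3 n hn; omega
    obtain ⟨hconds, hA⟩ := hτ q' hplay'
    constructor
    · intro i
      obtain ⟨c1, c2, c3, c4⟩ := hconds i
      rw [keyτ (i + 1), keyτ (i + 2), keyn i, keyn (i + 1)]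
      exact ⟨(hspec i).2.1 c1, c2, c3, by omega⟩
    · have : (fun i => (τ' (hist q (i + 1))).1) =
          (fun i => (τ (hist q' (i + 1))).1) :=
        funext fun i => by rw [keyτ (i + 1)]
      rw [this]
      exact hA
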